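/- Let H = S(G,a,b) be a shortest path graph, let i be fixed with 1 ≤ i < d(a,b), let v_{i_1},…,v_{i_k} be the vertices of G at distance i from a that lie on some a,b-geodesic, and let E_i be the set of edges of H whose difference index is i. Then H minus the edges E_i is the disjoint union over j of the subgraphs induced by the geodesics through v_{i_j}, each isomorphic to S(G,a,v_{i_j}) □ S(G,v_{i_j},b); moreover for any two such components, the edges of E_i between them form a partial matching. -/

import Mathlib

open SimpleGraph

/-- The type of `a,b`-geodesics in `G`: paths from `a` to `b` of length `d_G(a,b)`. -/
def Geodesic {V : Type*} (G : SimpleGraph V) (a b : V) : Type _ :=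
  {p : G.Walk a b // p.IsPath ∧ p.length = G.dist a b}

/-- Two geodesics differ at exactly the index `i` (comparing vertex sequences). -/
def DiffAt {V : Type*} {G : SimpleGraph V} {a b : V} (U W : Geodesic G a b) (i : ℕ) : Prop :=
  U.1.support.getD i a ≠ W.1.support.getD i a ∧
    ∀ j, j ≠ i → U.1.support.getD j a = W.1.support.getD j a

/-- The shortest path graph `S(G,a,b)`: vertices are `a,b`-geodesics, adjacent iff their
vertex sequences differ in exactly one position. -/
def SPG {V : Type*} (G : SimpleGraph V) (a b : V) : SimpleGraph (Geodesic G a b) where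
  Adj U W := ∃ i, DiffAt U W i
  symm := by
    constructor
    rintro U W ⟨i, hne, hj⟩
    exact ⟨i, hne.symm, fun j hji => (hj j hji).symm⟩
  loopless := by
    constructor
    rintro U ⟨i, hne, -⟩
    exact hne rfl

/-- A graph is a shortest path graph if it is isomorphic to `S(G,a,b)` for some `G`, `a ≠ b`. -/
def IsSPGraph {α : Type*} (H : SimpleGraph α) : Prop :=
  ∃ (V : Type) (G : SimpleGraph V) (a b : V), a ≠ b ∧ Nonempty (H ≃g SPG G a b)

/-- The shortest path graph with all edges of difference index `i` deleted. -/
def SPGMinus {V : Type*} (G : SimpleGraph V) (a b : V) (i : ℕ) :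
    SimpleGraph (Geodesic G a b) where
  Adj U W := (SPG G a b).Adj U W ∧ ¬ DiffAt U W i
  symm := by
    constructor
    rintro U W ⟨h1, h2⟩
    exact ⟨h1.symm, fun hd => h2 ⟨hd.1.symm, fun j hj => (hd.2 j hj).symm⟩⟩
  loopless := by
    constructor
    intro U h
    exact (SPG G a b).irrefl h.1


section Helpers
variable {V : Type*} {G : SimpleGraph V}

lemma list_ext_getD {α : Type*} (c : α) {l1 l2 : List α} (hl : l1.length = l2.length)
    (h : ∀ n, l1.getD n c = l2.getD n c) : l1 = l2 := by
  apply List.ext_getElem hl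
  intro n h1 h2
  have := h n
  rwa [List.getD_eq_getElem _ _ h1, List.getD_eq_getElem _ _ h2] at this

lemma getD_indep {α : Type*} {l : List α} {n : ℕ} (h : n < l.length) (c c' : α) :
    l.getD n c = l.getD n c' := by
  rw [List.getD_eq_getElem _ _ h, List.getD_eq_getElem _ _ h]

lemma support_getD_length {x y : V} (p : G.Walk x y) (c : V) :
    p.support.getD p.length c = y := by
  induction p with
  | nil => rfl
  | cons h p ih => simpa using ih

lemma support_getD_len {x y : V} {p : G.Walk x y} {n : ℕ} (h : p.length = n) (c : V) :
    p.support.getD n c = y := h ▸ support_getD_length p c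

lemma support_getD_default {x y : V} (p : G.Walk x y) {n : ℕ} (h : p.length < n) (c : V) :
    p.support.getD n c = c :=
  List.getD_eq_default _ _ (by rw [Walk.length_support]; omega)

lemma support_getD_zero {x y : V} (p : G.Walk x y) (c : V) :
    p.support.getD 0 c = x := by
  rw [Walk.support_eq_cons, List.getD_cons_zero]

lemma walk_eq_of_support_eq : ∀ {x y : V} (p q : G.Walk x y), p.support = q.support → p = q := by
  intro x y p
  induction p with
  | nil => intro q h; cases q with
    | nil => rfl
    | cons h' q' =>
      rw [Walk.support_nil, Walk.support_cons] at h
      injection h with _ h2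
      exact absurd h2.symm (Walk.support_ne_nil _)
  | cons hadj p ih =>
    intro q h
    cases q with
    | nil =>
      rw [Walk.support_nil, Walk.support_cons] at h
      injection h with _ h2
      exact absurd h2 (Walk.support_ne_nil _)
    | cons hadj' q' =>
      simp only [Walk.support_cons, List.cons.injEq, true_and] at h
      have hw : _ = _ := (Walk.support_eq_cons p).symm.trans (h.trans (Walk.support_eq_cons q'))
      obtain rfl := (List.cons.injEq _ _ _ _).mp hw |>.1
      rw [ih q' h]

lemma walk_split {x y : V} (p : G.Walk x y) (i : ℕ) (hi : i ≤ p.length) :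
    ∃ (w : V) (q : G.Walk x w) (r : G.Walk w y), p = q.append r ∧ q.length = i := by
  induction p generalizing i with
  | nil => exact ⟨_, Walk.nil, Walk.nil, rfl, by simp only [Walk.length_nil] at hi ⊢; omega⟩
  | @cons u w' y hadj p ih =>
    cases i with
    | zero => exact ⟨u, Walk.nil, Walk.cons hadj p, rfl, rfl⟩
    | succ n =>
      obtain ⟨w, q, r, h1, h2⟩ := ih n (by simpa using hi)
      exact ⟨w, Walk.cons hadj q, r, by rw [Walk.cons_append, ← h1], by simp [h2]⟩

lemma append_getD_le {x y z : V} (q : G.Walk x y) (r : G.Walk y z) {j : ℕ}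
    (h : j ≤ q.length) (c : V) :
    (q.append r).support.getD j c = q.support.getD j c := by
  rw [Walk.support_append, List.getD_append _ _ _ _ (by rw [Walk.length_support]; omega)]

lemma append_getD_ge {x y z : V} (q : G.Walk x y) (r : G.Walk y z) {j : ℕ}
    (h : q.length ≤ j) (c : V) :
    (q.append r).support.getD j c = r.support.getD (j - q.length) c := by
  rcases Nat.eq_or_lt_of_le h with rfl | hlt
  · rw [append_getD_le q r le_rfl, Nat.sub_self, support_getD_length,
      Walk.support_eq_cons r, List.getD_cons_zero]
  · have hj : j - q.length = (j - (q.length + 1)) + 1 := by omega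
    rw [Walk.support_append, List.getD_append_right _ _ _ _ (by rw [Walk.length_support]; omega),
      Walk.length_support, hj]
    conv_rhs => rw [Walk.support_eq_cons r]
    rw [List.getD_cons_succ]

end Helpers

theorem stmt10 {V : Type*} (G : SimpleGraph V) (a b : V) (hab : a ≠ b)
    (i : ℕ) (hi1 : 1 ≤ i) (hi2 : i < G.dist a b) :
    -- (a) no edge of H ∖ Eᵢ joins geodesics passing through different vertices at index i,
    (∀ U W : Geodesic G a b, (SPGMinus G a b i).Adj U W →
        U.1.support.getD i a = W.1.support.getD i a) ∧
    -- so H ∖ Eᵢ is the disjoint union of the parts D_v; each part is a Cartesian product: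
    (∀ v : V, (∃ U : Geodesic G a b, U.1.support.getD i a = v) →
        Nonempty (((SPGMinus G a b i).induce
            {U : Geodesic G a b | U.1.support.getD i a = v}) ≃g
          (SPG G a v □ SPG G v b))) ∧
    -- (b) the Eᵢ-edges between two distinct parts form a partial matching:
    (∀ U W W' : Geodesic G a b,
        U.1.support.getD i a ≠ W.1.support.getD i a →
        W.1.support.getD i a = W'.1.support.getD i a →
        (SPG G a b).Adj U W → (SPG G a b).Adj U W' →
        DiffAt U W i → DiffAt U W' i → W = W') := by
  refine ⟨?_, ?_, ?_⟩
  · rintro U W ⟨⟨j, hd⟩, hni⟩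
    have hji : j ≠ i := by rintro rfl; exact hni hd
    exact hd.2 i (Ne.symm hji)
  · rintro v ⟨U₀, hU₀⟩
    have hU₀len : U₀.1.length = G.dist a b := U₀.2.2
    obtain ⟨w, q₀, r₀, hsp₀, hq₀len⟩ := walk_split U₀.1 i (by omega)
    have hw : v = w := by
      have h1 : U₀.1.support.getD i a = w := by
        rw [hsp₀, append_getD_le q₀ r₀ (le_of_eq hq₀len.symm) a, support_getD_len hq₀len]
      exact hU₀.symm.trans h1
    subst hw
    have hr₀len : r₀.length = G.dist a b - i := by
      have := congrArg Walk.length hsp₀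
      rw [Walk.length_append] at this; omega
    have hdist : G.dist a v = i ∧ G.dist v b = G.dist a b - i := by
      have h1 : G.dist a v ≤ i := hq₀len ▸ G.dist_le q₀
      have h2 : G.dist v b ≤ G.dist a b - i := hr₀len ▸ G.dist_le r₀
      obtain ⟨p1, hp1⟩ := (q₀.reachable).exists_walk_length_eq_dist
      obtain ⟨p2, hp2⟩ := (r₀.reachable).exists_walk_length_eq_dist
      have h3 := G.dist_le (p1.append p2)
      rw [Walk.length_append, hp1, hp2] at h3
      omega
    obtain ⟨hdav, hdvb⟩ := hdist
    have hglen : ∀ (p : Geodesic G a v), p.1.length = i := fun p => p.2.2.trans hdav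
    have hglen' : ∀ (q : Geodesic G v b), q.1.length = G.dist a b - i :=
      fun q => q.2.2.trans hdvb
    let F : Geodesic G a v × Geodesic G v b →
        {U : Geodesic G a b | U.1.support.getD i a = v} :=
      fun x => ⟨⟨x.1.1.append x.2.1,
        Walk.isPath_of_length_eq_dist _
          (by rw [Walk.length_append, hglen x.1, hglen' x.2]; omega),
        by rw [Walk.length_append, hglen x.1, hglen' x.2]; omega⟩,
        by
          show (x.1.1.append x.2.1).support.getD i a = v
          rw [append_getD_le x.1.1 x.2.1 (le_of_eq (hglen x.1).symm) a,
            support_getD_len (hglen x.1)]⟩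
    have key : ∀ (p : Geodesic G a v) (q : Geodesic G v b) (j : ℕ) (c : V),
        (p.1.append q.1).support.getD j c =
          if j ≤ i then p.1.support.getD j c else q.1.support.getD (j - i) c := by
      intro p q j c
      by_cases hj : j ≤ i
      · rw [if_pos hj, append_getD_le _ _ (by rw [hglen p]; omega) c]
      · rw [if_neg hj, append_getD_ge _ _ (by rw [hglen p]; omega) c, hglen p]
    have keyi : ∀ (p : Geodesic G a v) (q : Geodesic G v b),
        (p.1.append q.1).support.getD i a = v := fun p q => by
      rw [key p q i a, if_pos le_rfl, support_getD_len (hglen p)]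
    have hinj : Function.Injective F := by
      rintro ⟨p, q⟩ ⟨p', q'⟩ h
      have hsup : (p.1.append q.1).support = (p'.1.append q'.1).support :=
        congrArg (fun z => ((z : {U : Geodesic G a b | U.1.support.getD i a = v}).1.1.support)) h
      have hgetD : ∀ n c, (p.1.append q.1).support.getD n c
          = (p'.1.append q'.1).support.getD n c := fun n c => by rw [hsup]
      have hp : p = p' := by
        apply Subtype.ext; apply walk_eq_of_support_eq
        apply list_ext_getD a
        · rw [Walk.length_support, Walk.length_support, hglen p, hglen p']
        · intro n
          rcases le_or_gt n i with hn | hn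
          · have h2 := hgetD n a
            rw [key p q n a, key p' q' n a, if_pos hn, if_pos hn] at h2
            exact h2
          · rw [support_getD_default p.1 (by rw [hglen p]; omega) a,
              support_getD_default p'.1 (by rw [hglen p']; omega) a]
      have hq : q = q' := by
        apply Subtype.ext; apply walk_eq_of_support_eq
        apply list_ext_getD v
        · rw [Walk.length_support, Walk.length_support, hglen' q, hglen' q']
        · intro n
          cases n with
          | zero => rw [support_getD_zero, support_getD_zero]
          | succ m =>
            rcases le_or_gt (m + 1) (G.dist a b - i) with hm | hm
            · rw [getD_indep (by rw [Walk.length_support, hglen' q]; omega) v a,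
                getD_indep (by rw [Walk.length_support, hglen' q']; omega) v a]
              have h2 := hgetD (i + (m + 1)) a
              rw [key p q _ a, key p' q' _ a, if_neg (by omega), if_neg (by omega),
                Nat.add_sub_cancel_left] at h2
              exact h2
            · rw [support_getD_default q.1 (by rw [hglen' q]; omega) v,
                support_getD_default q'.1 (by rw [hglen' q']; omega) v]
      rw [Prod.ext_iff]; exact ⟨hp, hq⟩
    have hsurj : Function.Surjective F := by
      rintro ⟨U, hU⟩
      obtain ⟨w, q, r, hsp, hqlen⟩ := walk_split U.1 i (by rw [U.2.2]; omega)
      have hw : U.1.support.getD i a = w := by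
        rw [hsp, append_getD_le q r (le_of_eq hqlen.symm) a, support_getD_len hqlen]
      have hw2 : w = v := hw.symm.trans hU
      subst hw2
      have hUpath : (q.append r).IsPath := hsp ▸ U.2.1
      have hrlen : r.length = G.dist a b - i := by
        have := congrArg Walk.length hsp
        rw [Walk.length_append] at this
        have := U.2.2
        omega
      exact ⟨(⟨q, hUpath.of_append_left, hqlen.trans hdav.symm⟩,
        ⟨r, hUpath.of_append_right, hrlen.trans hdvb.symm⟩),
        Subtype.ext (Subtype.ext hsp.symm)⟩
    have hadj : ∀ x y : Geodesic G a v × Geodesic G v b,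
        (SPGMinus G a b i).Adj (F x).1 (F y).1 ↔ (SPG G a v □ SPG G v b).Adj x y := by
      rintro ⟨p, q⟩ ⟨p', q'⟩
      rw [SimpleGraph.boxProd_adj]
      dsimp only
      show ((∃ j, DiffAt (F (p, q)).1 (F (p', q')).1 j) ∧
        ¬ DiffAt (F (p, q)).1 (F (p', q')).1 i) ↔ _
      constructor
      · rintro ⟨⟨j, hd1, hd2⟩, hni⟩
        have hji : j ≠ i := by rintro rfl; exact hni ⟨hd1, hd2⟩
        rcases Nat.lt_or_ge j i with hj | hj
        · left
          refine ⟨⟨j, ?_, ?_⟩, ?_⟩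
          · have h1 := hd1
            rw [key p q j a, key p' q' j a, if_pos hj.le, if_pos hj.le] at h1
            exact h1
          · intro m hm
            rcases le_or_gt m i with hmi | hmi
            · have h2 := hd2 m hm
              rw [key p q m a, key p' q' m a, if_pos hmi, if_pos hmi] at h2
              exact h2
            · rw [support_getD_default p.1 (by rw [hglen p]; omega) a,
                support_getD_default p'.1 (by rw [hglen p']; omega) a]
          · -- q = q'
            apply Subtype.ext; apply walk_eq_of_support_eq
            apply list_ext_getD v
            · rw [Walk.length_support, Walk.length_support, hglen' q, hglen' q']
            · intro n
              cases n with
              | zero => rw [support_getD_zero, support_getD_zero]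
              | succ m =>
                rcases le_or_gt (m + 1) (G.dist a b - i) with hm | hm
                · rw [getD_indep (by rw [Walk.length_support, hglen' q]; omega) v a,
                    getD_indep (by rw [Walk.length_support, hglen' q']; omega) v a]
                  have h2 := hd2 (i + (m + 1)) (by omega)
                  rw [key p q _ a, key p' q' _ a, if_neg (by omega), if_neg (by omega),
                    Nat.add_sub_cancel_left] at h2
                  exact h2
                · rw [support_getD_default q.1 (by rw [hglen' q]; omega) v,
                    support_getD_default q'.1 (by rw [hglen' q']; omega) v]
        · -- i < j
          have hji' : i < j := by omega
          right
          have hAlen : (p.1.append q.1).length = G.dist a b := by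
            rw [Walk.length_append, hglen p, hglen' q]; omega
          have hAlen' : (p'.1.append q'.1).length = G.dist a b := by
            rw [Walk.length_append, hglen p', hglen' q']; omega
          have hjd : j ≤ G.dist a b := by
            by_contra h
            apply hd1
            rw [support_getD_default _ (by omega : (p.1.append q.1).length < j) a,
              support_getD_default _ (by omega : (p'.1.append q'.1).length < j) a]
          refine ⟨⟨j - i, ?_, ?_⟩, ?_⟩
          · -- q, q' differ at j - i
            rw [getD_indep (by rw [Walk.length_support, hglen' q]; omega) v a,
              getD_indep (by rw [Walk.length_support, hglen' q']; omega) v a]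
            have h1 := hd1
            rw [key p q j a, key p' q' j a, if_neg (by omega), if_neg (by omega)] at h1
            exact h1
          · intro m hm
            cases m with
            | zero => rw [support_getD_zero, support_getD_zero]
            | succ m =>
              rcases le_or_gt (m + 1) (G.dist a b - i) with hm' | hm'
              · rw [getD_indep (by rw [Walk.length_support, hglen' q]; omega) v a,
                  getD_indep (by rw [Walk.length_support, hglen' q']; omega) v a]
                have h2 := hd2 (i + (m + 1)) (by omega)
                rw [key p q _ a, key p' q' _ a, if_neg (by omega), if_neg (by omega),
                  Nat.add_sub_cancel_left] at h2
                exact h2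
              · rw [support_getD_default q.1 (by rw [hglen' q]; omega) v,
                  support_getD_default q'.1 (by rw [hglen' q']; omega) v]
          · -- p = p'
            apply Subtype.ext; apply walk_eq_of_support_eq
            apply list_ext_getD a
            · rw [Walk.length_support, Walk.length_support, hglen p, hglen p']
            · intro n
              rcases le_or_gt n i with hn | hn
              · have h2 := hd2 n (by omega)
                rw [key p q n a, key p' q' n a, if_pos hn, if_pos hn] at h2
                exact h2
              · rw [support_getD_default p.1 (by rw [hglen p]; omega) a,
                  support_getD_default p'.1 (by rw [hglen p']; omega) a]
      · rintro (⟨⟨j, hd1, hd2⟩, rfl⟩ | ⟨⟨j, hd1, hd2⟩, rfl⟩)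
        · -- p, p' differ at j; q = q'
          have hjlt : j < i := by
            by_contra h
            push_neg at h
            apply hd1
            rcases Nat.eq_or_lt_of_le h with rfl | hlt
            · rw [support_getD_len (hglen p), support_getD_len (hglen p')]
            · rw [support_getD_default p.1 (by rw [hglen p]; omega) a,
                support_getD_default p'.1 (by rw [hglen p']; omega) a]
          refine ⟨⟨j, ?_, ?_⟩, ?_⟩
          · rw [key p q j a, key p' q j a, if_pos hjlt.le, if_pos hjlt.le]
            exact hd1
          · intro m hm
            rcases le_or_gt m i with hmi | hmi
            · rw [key p q m a, key p' q m a, if_pos hmi, if_pos hmi]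
              exact hd2 m hm
            · rw [key p q m a, key p' q m a, if_neg (by omega), if_neg (by omega)]
          · intro hD
            exact hD.1 ((keyi p q).trans (keyi p' q).symm)
        · -- p = p'; q, q' differ at j
          have hj0 : j ≠ 0 := by
            rintro rfl
            apply hd1
            rw [support_getD_zero, support_getD_zero]
          have hjle : j ≤ G.dist a b - i := by
            by_contra h
            apply hd1
            rw [support_getD_default q.1 (by rw [hglen' q]; omega) v,
              support_getD_default q'.1 (by rw [hglen' q']; omega) v]
          refine ⟨⟨i + j, ?_, ?_⟩, ?_⟩
          · rw [key p q _ a, key p q' _ a, if_neg (by omega), if_neg (by omega),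
              Nat.add_sub_cancel_left,
              getD_indep (by rw [Walk.length_support, hglen' q]; omega) a v,
              getD_indep (by rw [Walk.length_support, hglen' q']; omega) a v]
            exact hd1
          · intro m hm
            rcases le_or_gt m i with hmi | hmi
            · rw [key p q m a, key p q' m a, if_pos hmi, if_pos hmi]
            · rw [key p q m a, key p q' m a, if_neg (by omega), if_neg (by omega)]
              rcases le_or_gt (m - i) (G.dist a b - i) with hm' | hm'
              · rw [getD_indep (by rw [Walk.length_support, hglen' q]; omega) a v,
                  getD_indep (by rw [Walk.length_support, hglen' q']; omega) a v]
                exact hd2 (m - i) (by omega)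
              · rw [support_getD_default q.1 (by rw [hglen' q]; omega) a,
                  support_getD_default q'.1 (by rw [hglen' q']; omega) a]
          · intro hD
            exact hD.1 ((keyi p q).trans (keyi p q').symm)
    exact ⟨(RelIso.mk (Equiv.ofBijective F ⟨hinj, hsurj⟩) (fun {x y} => hadj x y)).symm⟩
  · intro U W W' hne heq _ _ hW hW'
    apply Subtype.ext
    apply walk_eq_of_support_eq
    apply list_ext_getD a
    · rw [Walk.length_support, Walk.length_support, W.2.2, W'.2.2]
    · intro n
      by_cases hn : n = i
      · subst hn; exact heq
      · exact (hW.2 n hn).symm.trans (hW'.2 n hn)
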